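/- Let n, m ≥ 1, let 𝔹^n and 𝔹^m denote the Euclidean unit balls, Z := 𝔹^n × 𝔹^m ⊂ ℝ^{n+m}, and write z = (z_x, z_y) ∈ ℝ^n × ℝ^m for z ∈ Z. Let B ∈ ℝ^{m×n}, τ > 0, and let ψ : Z → ℝ be differentiable, convex in z_x for each fixed z_y and concave in z_y for each fixed z_x, with gradient mapping ∇±ψ(z) := (∇_x ψ(z), −∇_y ψ(z)); set ∇±f_B(z) := (Bᵀ z_y, −B z_x). Fix z, w, z' ∈ Z and suppose that for all u ∈ Z: ⟨∇±f_B(z) + ∇±ψ(w), w − u⟩ ≤ τ·(½‖z−u‖₂² − ½‖w−u‖₂² − ½‖z−w‖₂²) and ⟨∇±f_B(w) + ∇±ψ(w), z' − u⟩ ≤ τ·(½‖z−u‖₂² − ½‖z'−u‖₂² − ½‖z−z'‖₂²). Set z¹ := (w_x − z'_x, w_y − z_y) and z² := (z_x − w_x, w_y − z'_y). Then at least one of the following holds: (a) for all u ∈ Z, ⟨∇±f_B(w) + ∇±ψ(w), w − u⟩ ≤ τ·(½‖z−u‖₂² − ½‖z'−u‖₂²); (b) (z¹_y)ᵀ B z¹_x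 ≥ τ‖z¹_y‖₂‖z¹_x‖₂; (c) (z²_y)ᵀ B z²_x ≥ τ‖z²_y‖₂‖z²_x‖₂. -/

import Mathlib

open Matrix RealInnerProductSpace

/-- Matrix-vector product viewed as a map between Euclidean spaces. -/
noncomputable def mulVecE {m n : ℕ} (B : Matrix (Fin m) (Fin n) ℝ)
    (x : EuclideanSpace ℝ (Fin n)) : EuclideanSpace ℝ (Fin m) :=
  WithLp.toLp 2 (B.mulVec x)


lemma mulVecE_sub {m n : ℕ} (B : Matrix (Fin m) (Fin n) ℝ)
    (x y : EuclideanSpace ℝ (Fin n)) :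
    mulVecE B (x - y) = mulVecE B x - mulVecE B y := by
  ext i
  simp [mulVecE, Matrix.mulVec, dotProduct, mul_sub, Finset.sum_sub_distrib]

lemma mulVecE_adj {m n : ℕ} (B : Matrix (Fin m) (Fin n) ℝ)
    (x : EuclideanSpace ℝ (Fin n)) (y : EuclideanSpace ℝ (Fin m)) :
    ⟪mulVecE Bᵀ y, x⟫ = ⟪mulVecE B x, y⟫ := by
  simp only [mulVecE, PiLp.inner_apply, RCLike.inner_apply, conj_trivial,
    PiLp.toLp_apply, Matrix.mulVec, dotProduct, Matrix.transpose_apply, Finset.mul_sum]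
  rw [Finset.sum_comm]
  congr 1; ext i; congr 1; ext j; ring

set_option maxHeartbeats 1000000 in
/-- Smooth-until-guilty mirror prox step dichotomy in the ℓ₂-ℓ₂ setup:
either the mirror prox step makes progress (the variational inequality (a) holds for all
`u ∈ Z = 𝔹^n × 𝔹^m`), or one of the two test pairs reveals a `τ`-large component of `B`
((b) or (c)). -/
theorem stmt2 {n m : ℕ} (hn : 1 ≤ n) (hm : 1 ≤ m)
    (B : Matrix (Fin m) (Fin n) ℝ) (τ : ℝ) (hτ : 0 < τ)
    (ψ : EuclideanSpace ℝ (Fin n) × EuclideanSpace ℝ (Fin m) → ℝ)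
    (gψx : EuclideanSpace ℝ (Fin n) × EuclideanSpace ℝ (Fin m) → EuclideanSpace ℝ (Fin n))
    (gψy : EuclideanSpace ℝ (Fin n) × EuclideanSpace ℝ (Fin m) → EuclideanSpace ℝ (Fin m))
    (hgx : ∀ z : EuclideanSpace ℝ (Fin n) × EuclideanSpace ℝ (Fin m),
      z.1 ∈ Metric.closedBall (0 : EuclideanSpace ℝ (Fin n)) 1 →
      z.2 ∈ Metric.closedBall (0 : EuclideanSpace ℝ (Fin m)) 1 →
      HasGradientAt (fun x => ψ (x, z.2)) (gψx z) z.1)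
    (hgy : ∀ z : EuclideanSpace ℝ (Fin n) × EuclideanSpace ℝ (Fin m),
      z.1 ∈ Metric.closedBall (0 : EuclideanSpace ℝ (Fin n)) 1 →
      z.2 ∈ Metric.closedBall (0 : EuclideanSpace ℝ (Fin m)) 1 →
      HasGradientAt (fun y => ψ (z.1, y)) (gψy z) z.2)
    (hconv : ∀ y ∈ Metric.closedBall (0 : EuclideanSpace ℝ (Fin m)) 1,
      ConvexOn ℝ (Metric.closedBall (0 : EuclideanSpace ℝ (Fin n)) 1) (fun x => ψ (x, y)))
    (hconc : ∀ x ∈ Metric.closedBall (0 : EuclideanSpace ℝ (Fin n)) 1,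
      ConcaveOn ℝ (Metric.closedBall (0 : EuclideanSpace ℝ (Fin m)) 1) (fun y => ψ (x, y)))
    (z w z' : EuclideanSpace ℝ (Fin n) × EuclideanSpace ℝ (Fin m))
    (hz1 : z.1 ∈ Metric.closedBall (0 : EuclideanSpace ℝ (Fin n)) 1)
    (hz2 : z.2 ∈ Metric.closedBall (0 : EuclideanSpace ℝ (Fin m)) 1)
    (hw1 : w.1 ∈ Metric.closedBall (0 : EuclideanSpace ℝ (Fin n)) 1)
    (hw2 : w.2 ∈ Metric.closedBall (0 : EuclideanSpace ℝ (Fin m)) 1)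
    (hz'1 : z'.1 ∈ Metric.closedBall (0 : EuclideanSpace ℝ (Fin n)) 1)
    (hz'2 : z'.2 ∈ Metric.closedBall (0 : EuclideanSpace ℝ (Fin m)) 1)
    (hstep1 : ∀ u : EuclideanSpace ℝ (Fin n) × EuclideanSpace ℝ (Fin m),
      u.1 ∈ Metric.closedBall (0 : EuclideanSpace ℝ (Fin n)) 1 →
      u.2 ∈ Metric.closedBall (0 : EuclideanSpace ℝ (Fin m)) 1 →
      ⟪mulVecE Bᵀ z.2 + gψx w, w.1 - u.1⟫ + ⟪-mulVecE B z.1 - gψy w, w.2 - u.2⟫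
        ≤ τ * ((1 / 2 * ‖z.1 - u.1‖ ^ 2 + 1 / 2 * ‖z.2 - u.2‖ ^ 2)
             - (1 / 2 * ‖w.1 - u.1‖ ^ 2 + 1 / 2 * ‖w.2 - u.2‖ ^ 2)
             - (1 / 2 * ‖z.1 - w.1‖ ^ 2 + 1 / 2 * ‖z.2 - w.2‖ ^ 2)))
    (hstep2 : ∀ u : EuclideanSpace ℝ (Fin n) × EuclideanSpace ℝ (Fin m),
      u.1 ∈ Metric.closedBall (0 : EuclideanSpace ℝ (Fin n)) 1 →
      u.2 ∈ Metric.closedBall (0 : EuclideanSpace ℝ (Fin m)) 1 →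
      ⟪mulVecE Bᵀ w.2 + gψx w, z'.1 - u.1⟫ + ⟪-mulVecE B w.1 - gψy w, z'.2 - u.2⟫
        ≤ τ * ((1 / 2 * ‖z.1 - u.1‖ ^ 2 + 1 / 2 * ‖z.2 - u.2‖ ^ 2)
             - (1 / 2 * ‖z'.1 - u.1‖ ^ 2 + 1 / 2 * ‖z'.2 - u.2‖ ^ 2)
             - (1 / 2 * ‖z.1 - z'.1‖ ^ 2 + 1 / 2 * ‖z.2 - z'.2‖ ^ 2))) :
    (∀ u : EuclideanSpace ℝ (Fin n) × EuclideanSpace ℝ (Fin m),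
        u.1 ∈ Metric.closedBall (0 : EuclideanSpace ℝ (Fin n)) 1 →
        u.2 ∈ Metric.closedBall (0 : EuclideanSpace ℝ (Fin m)) 1 →
        ⟪mulVecE Bᵀ w.2 + gψx w, w.1 - u.1⟫ + ⟪-mulVecE B w.1 - gψy w, w.2 - u.2⟫
          ≤ τ * ((1 / 2 * ‖z.1 - u.1‖ ^ 2 + 1 / 2 * ‖z.2 - u.2‖ ^ 2)
               - (1 / 2 * ‖z'.1 - u.1‖ ^ 2 + 1 / 2 * ‖z'.2 - u.2‖ ^ 2)))
    ∨ τ * (‖w.2 - z.2‖ * ‖w.1 - z'.1‖) ≤ ⟪mulVecE B (w.1 - z'.1), w.2 - z.2⟫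
    ∨ τ * (‖w.2 - z'.2‖ * ‖z.1 - w.1‖) ≤ ⟪mulVecE B (z.1 - w.1), w.2 - z'.2⟫ := by
  rcases le_or_gt (τ * (‖w.2 - z.2‖ * ‖w.1 - z'.1‖)) ⟪mulVecE B (w.1 - z'.1), w.2 - z.2⟫ with hb | hb
  · exact Or.inr (Or.inl hb)
  rcases le_or_gt (τ * (‖w.2 - z'.2‖ * ‖z.1 - w.1‖)) ⟪mulVecE B (z.1 - w.1), w.2 - z'.2⟫ with hc | hc
  · exact Or.inr (Or.inr hc)
  left
  intro u hu1 hu2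
  have key1 := hstep1 z' hz'1 hz'2
  have key2 := hstep2 u hu1 hu2
  have e1 : ⟪mulVecE Bᵀ w.2 + gψx w, w.1 - u.1⟫ =
      ⟪mulVecE Bᵀ w.2 + gψx w, z'.1 - u.1⟫ + ⟪mulVecE Bᵀ z.2 + gψx w, w.1 - z'.1⟫
        + ⟪mulVecE B (w.1 - z'.1), w.2 - z.2⟫ := by
    rw [← mulVecE_adj, mulVecE_sub]
    simp only [inner_add_left, inner_sub_left, inner_sub_right]
    ring
  have e2 : ⟪-mulVecE B w.1 - gψy w, w.2 - u.2⟫ =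
      ⟪-mulVecE B w.1 - gψy w, z'.2 - u.2⟫ + ⟪-mulVecE B z.1 - gψy w, w.2 - z'.2⟫
        + ⟪mulVecE B (z.1 - w.1), w.2 - z'.2⟫ := by
    rw [mulVecE_sub]
    simp only [inner_add_left, inner_sub_left, inner_sub_right, inner_neg_left]
    ring
  have amgm1 : ⟪mulVecE B (w.1 - z'.1), w.2 - z.2⟫
      ≤ τ * (1 / 2 * ‖w.2 - z.2‖ ^ 2 + 1 / 2 * ‖w.1 - z'.1‖ ^ 2) := by
    nlinarith [hb, sq_nonneg (‖w.2 - z.2‖ - ‖w.1 - z'.1‖), hτ]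
  have amgm2 : ⟪mulVecE B (z.1 - w.1), w.2 - z'.2⟫
      ≤ τ * (1 / 2 * ‖w.2 - z'.2‖ ^ 2 + 1 / 2 * ‖z.1 - w.1‖ ^ 2) := by
    nlinarith [hc, sq_nonneg (‖w.2 - z'.2‖ - ‖z.1 - w.1‖), hτ]
  have n1 : ‖w.2 - z.2‖ = ‖z.2 - w.2‖ := norm_sub_rev _ _
  rw [n1] at amgm1
  rw [e1, e2]
  linarith [key1, key2, amgm1, amgm2]
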